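/- Define the effective speed by the Lyons–Pemantle–Peres formula v(p) = ∑_{k≥0} ((k−1)/(k+1)) p_k(p) (1 − q_p^{k+1})/(1 − q_p²), which is the almost-sure speed lim |X_n|/n of simple random walk on the p-percolated Galton–Watson tree conditioned on survival. Then lim_{p→p_c⁺} v(p)/(p − p_c)² = m₁⁴/(3m₂). -/

import Mathlib

open Filter Set Topology
open scoped Topology

/-- The probability generating function `f(s) = ∑ₖ aₖ sᵏ` of a distribution `a` on ℕ. -/
noncomputable def pgf (a : ℕ → ℝ) (s : ℝ) : ℝ := ∑' n, a n * s ^ n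

/-- The binomially `p`-thinned offspring probabilities
`p_k(p) = ∑_{n ≥ k} C(n,k) pᵏ (1-p)^{n-k} p_n`. -/
noncomputable def thinned (a : ℕ → ℝ) (p : ℝ) (k : ℕ) : ℝ :=
  ∑' n, if k ≤ n then (n.choose k : ℝ) * p ^ k * (1 - p) ^ (n - k) * a n else 0

/-- The generating function `f_p(s) = f(ps + 1 - p)` of the binomially `p`-thinned
(percolated) offspring distribution. -/
noncomputable def pgfp (a : ℕ → ℝ) (p s : ℝ) : ℝ := pgf a (p * s + 1 - p)

/-- The Lyons–Pemantle–Peres effective speed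
`v(p) = ∑ₖ ((k-1)/(k+1)) p_k(p) (1 - q_p^{k+1})/(1 - q_p²)` of simple random walk on the
`p`-percolated Galton–Watson tree conditioned on survival. -/
noncomputable def speedLPP (a : ℕ → ℝ) (q : ℝ → ℝ) (p : ℝ) : ℝ :=
  ∑' k : ℕ, (((k : ℝ) - 1) / ((k : ℝ) + 1)) * thinned a p k *
    ((1 - q p ^ (k + 1)) / (1 - q p ^ 2))



lemma desc2_nonneg (n : ℕ) : (0:ℝ) ≤ (n:ℝ) * ((n:ℝ) - 1) := by
  rcases n with _ | m
  · simp
  · have h : (0:ℝ) ≤ (m:ℝ) := Nat.cast_nonneg m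
    push_cast; nlinarith

lemma desc3_nonneg (n : ℕ) : (0:ℝ) ≤ (n:ℝ) * ((n:ℝ) - 1) * ((n:ℝ) - 2) := by
  rcases n with _ | _ | m
  · simp
  · norm_num
  · have h : (0:ℝ) ≤ (m:ℝ) := Nat.cast_nonneg m
    push_cast
    nlinarith [mul_nonneg (mul_nonneg (show (0:ℝ) ≤ (m:ℝ)+2 by linarith)
      (show (0:ℝ) ≤ (m:ℝ)+1 by linarith)) h]

lemma desc4_nonneg (n : ℕ) : (0:ℝ) ≤ (n:ℝ) * ((n:ℝ) - 1) * ((n:ℝ) - 2) * ((n:ℝ) - 3) := by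
  rcases n with _ | _ | _ | m
  · simp
  · norm_num
  · norm_num
  · have h : (0:ℝ) ≤ (m:ℝ) := Nat.cast_nonneg m
    push_cast
    nlinarith [mul_nonneg (mul_nonneg (mul_nonneg (show (0:ℝ) ≤ (m:ℝ)+3 by linarith)
      (show (0:ℝ) ≤ (m:ℝ)+2 by linarith)) (show (0:ℝ) ≤ (m:ℝ)+1 by linarith)) h]

lemma bin2 {x : ℝ} (hx0 : 0 ≤ x) (hx1 : x ≤ 1) (n : ℕ) :
    (1 - x) ^ n ≤ 1 - n * x + n * (n - 1) / 2 * x ^ 2 := by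
  induction n with
  | zero => simp
  | succ n ih =>
      have h1 : (0:ℝ) ≤ 1 - x := by linarith
      have h2 : (1 - x) ^ (n + 1) = (1 - x) * (1 - x) ^ n := by ring
      have h3 : (1 - x) * (1 - x) ^ n ≤ (1 - x) * (1 - (n:ℝ) * x + n * (n - 1) / 2 * x ^ 2) :=
        mul_le_mul_of_nonneg_left ih h1
      rw [h2]
      push_cast
      nlinarith [mul_nonneg (desc2_nonneg n) (pow_nonneg hx0 3)]

lemma bin3 {x : ℝ} (hx0 : 0 ≤ x) (hx1 : x ≤ 1) (n : ℕ) :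
    1 - n * x + n * (n - 1) / 2 * x ^ 2 - n * (n - 1) * (n - 2) / 6 * x ^ 3 ≤ (1 - x) ^ n := by
  induction n with
  | zero => simp
  | succ n ih =>
      have h1 : (0:ℝ) ≤ 1 - x := by linarith
      have h2 : (1 - x) ^ (n + 1) = (1 - x) * (1 - x) ^ n := by ring
      have h3 : (1 - x) * (1 - (n:ℝ) * x + n * (n - 1) / 2 * x ^ 2
            - n * (n - 1) * (n - 2) / 6 * x ^ 3) ≤ (1 - x) * (1 - x) ^ n :=
        mul_le_mul_of_nonneg_left ih h1
      rw [h2]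
      push_cast
      nlinarith [mul_nonneg (desc3_nonneg n) (pow_nonneg hx0 4)]

lemma bin4 {x : ℝ} (hx0 : 0 ≤ x) (hx1 : x ≤ 1) (n : ℕ) :
    (1 - x) ^ n ≤ 1 - n * x + n * (n - 1) / 2 * x ^ 2 - n * (n - 1) * (n - 2) / 6 * x ^ 3
      + n * (n - 1) * (n - 2) * (n - 3) / 24 * x ^ 4 := by
  induction n with
  | zero => simp
  | succ n ih =>
      have h1 : (0:ℝ) ≤ 1 - x := by linarith
      have h2 : (1 - x) ^ (n + 1) = (1 - x) * (1 - x) ^ n := by ring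
      have h3 : (1 - x) * (1 - x) ^ n ≤ (1 - x) * (1 - (n:ℝ) * x + n * (n - 1) / 2 * x ^ 2
            - n * (n - 1) * (n - 2) / 6 * x ^ 3
            + n * (n - 1) * (n - 2) * (n - 3) / 24 * x ^ 4) :=
        mul_le_mul_of_nonneg_left ih h1
      rw [h2]
      push_cast
      nlinarith [mul_nonneg (desc4_nonneg n) (pow_nonneg hx0 5)]

/-- general recursion for binomial-weighted sums -/
lemma binrec (w : ℕ → ℝ) (x : ℝ) (n : ℕ) :
    ∑ k ∈ Finset.range (n + 1 + 1), w k * ((n+1).choose k : ℝ) * x ^ k * (1 - x) ^ (n + 1 - k)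
      = x * (∑ k ∈ Finset.range (n + 1), w (k+1) * (n.choose k : ℝ) * x ^ k * (1 - x) ^ (n - k))
        + (1 - x) * (∑ k ∈ Finset.range (n + 1), w k * (n.choose k : ℝ) * x ^ k * (1 - x) ^ (n - k)) := by
  rw [Finset.sum_range_succ' (fun k => w k * ((n+1).choose k : ℝ) * x ^ k * (1 - x) ^ (n + 1 - k)) (n+1)]
  have hsplit : ∀ i ∈ Finset.range (n+1),
      w (i+1) * (((n+1).choose (i+1) : ℕ) : ℝ) * x ^ (i+1) * (1 - x) ^ (n + 1 - (i+1))
      = x * (w (i+1) * (n.choose i : ℝ) * x ^ i * (1 - x) ^ (n - i))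
        + w (i+1) * (n.choose (i+1) : ℝ) * x ^ (i+1) * (1 - x) ^ (n - i) := by
    intro i hi
    rw [Nat.choose_succ_succ]
    have h : n + 1 - (i + 1) = n - i := by omega
    rw [h]
    push_cast
    ring
  rw [Finset.sum_congr rfl hsplit, Finset.sum_add_distrib, ← Finset.mul_sum]
  have hsecond : (∑ i ∈ Finset.range (n+1), w (i+1) * (n.choose (i+1) : ℝ) * x ^ (i+1) * (1 - x) ^ (n - i))
      + w 0 * (((n+1).choose 0 : ℕ) : ℝ) * x ^ 0 * (1 - x) ^ (n + 1 - 0)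
      = (1 - x) * ∑ k ∈ Finset.range (n + 1), w k * (n.choose k : ℝ) * x ^ k * (1 - x) ^ (n - k) := by
    rw [Finset.sum_range_succ]
    simp only [Nat.choose_succ_self, Nat.cast_zero, mul_zero, zero_mul, mul_zero, add_zero,
      Nat.choose_zero_right, Nat.cast_one, mul_one, pow_zero]
    rw [Finset.mul_sum, Finset.sum_range_succ'
      (fun k => (1 - x) * (w k * (n.choose k : ℝ) * x ^ k * (1 - x) ^ (n - k))) n]
    have hcong : ∀ i ∈ Finset.range n,
        w (i+1) * (n.choose (i+1) : ℝ) * x ^ (i+1) * (1 - x) ^ (n - i)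
        = (1 - x) * (w (i+1) * (n.choose (i+1) : ℝ) * x ^ (i+1) * (1 - x) ^ (n - (i+1))) := by
      intro i hi
      rw [Finset.mem_range] at hi
      have h : n - i = (n - (i+1)) + 1 := by omega
      rw [h, pow_succ]
      ring
    rw [Finset.sum_congr rfl hcong]
    congr 1
    simp only [Nat.sub_zero, Nat.add_sub_cancel, Nat.choose_zero_right, Nat.cast_one, pow_zero,
      mul_one, one_mul]
    rw [pow_succ]
    ring
  rw [add_assoc, hsecond]

lemma S0 (x : ℝ) (n : ℕ) :
    ∑ k ∈ Finset.range (n + 1), (1:ℝ) * (n.choose k : ℝ) * x ^ k * (1 - x) ^ (n - k) = 1 := by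
  induction n with
  | zero => simp
  | succ n ih => rw [binrec (fun _ => (1:ℝ)) x n, ih]; ring

lemma Sgeom (x s : ℝ) (n : ℕ) :
    ∑ k ∈ Finset.range (n + 1), s ^ k * (n.choose k : ℝ) * x ^ k * (1 - x) ^ (n - k)
      = (x * s + 1 - x) ^ n := by
  induction n with
  | zero => simp
  | succ n ih =>
      rw [binrec (fun k => s ^ k) x n]
      have h : ∀ k ∈ Finset.range (n+1),
          s ^ (k+1) * (n.choose k : ℝ) * x ^ k * (1 - x) ^ (n - k)
          = s * (s ^ k * (n.choose k : ℝ) * x ^ k * (1 - x) ^ (n - k)) := by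
        intro k _; rw [pow_succ]; ring
      rw [Finset.sum_congr rfl h, ← Finset.mul_sum, ih, pow_succ]
      ring

lemma S1 (x : ℝ) (n : ℕ) :
    ∑ k ∈ Finset.range (n + 1), (k:ℝ) * (n.choose k : ℝ) * x ^ k * (1 - x) ^ (n - k)
      = n * x := by
  induction n with
  | zero => simp
  | succ n ih =>
      rw [binrec (fun k => (k:ℝ)) x n]
      have h : ∀ k ∈ Finset.range (n+1),
          ((k+1:ℕ):ℝ) * (n.choose k : ℝ) * x ^ k * (1 - x) ^ (n - k)
          = (k:ℝ) * (n.choose k : ℝ) * x ^ k * (1 - x) ^ (n - k)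
            + (1:ℝ) * (n.choose k : ℝ) * x ^ k * (1 - x) ^ (n - k) := by
        intro k _; push_cast; ring
      rw [Finset.sum_congr rfl h, Finset.sum_add_distrib, ih, S0]
      push_cast; ring

lemma S2 (x : ℝ) (n : ℕ) :
    ∑ k ∈ Finset.range (n + 1), ((k:ℝ) * ((k:ℝ) - 1)) * (n.choose k : ℝ) * x ^ k * (1 - x) ^ (n - k)
      = n * (n - 1) * x ^ 2 := by
  induction n with
  | zero => simp
  | succ n ih =>
      rw [binrec (fun k => (k:ℝ) * ((k:ℝ) - 1)) x n]
      have h : ∀ k ∈ Finset.range (n+1),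
          ((k+1:ℕ):ℝ) * (((k+1:ℕ):ℝ) - 1) * (n.choose k : ℝ) * x ^ k * (1 - x) ^ (n - k)
          = ((k:ℝ) * ((k:ℝ) - 1)) * (n.choose k : ℝ) * x ^ k * (1 - x) ^ (n - k)
            + 2 * ((k:ℝ) * (n.choose k : ℝ) * x ^ k * (1 - x) ^ (n - k)) := by
        intro k _; push_cast; ring
      rw [Finset.sum_congr rfl h, Finset.sum_add_distrib, ih, ← Finset.mul_sum, S1]
      push_cast; ring

lemma S3 (x : ℝ) (n : ℕ) :
    ∑ k ∈ Finset.range (n + 1), ((k:ℝ) * ((k:ℝ) - 1) * ((k:ℝ) - 2)) * (n.choose k : ℝ) * x ^ k * (1 - x) ^ (n - k)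
      = n * (n - 1) * (n - 2) * x ^ 3 := by
  induction n with
  | zero => simp
  | succ n ih =>
      rw [binrec (fun k => (k:ℝ) * ((k:ℝ) - 1) * ((k:ℝ) - 2)) x n]
      have h : ∀ k ∈ Finset.range (n+1),
          ((k+1:ℕ):ℝ) * (((k+1:ℕ):ℝ) - 1) * (((k+1:ℕ):ℝ) - 2) * (n.choose k : ℝ) * x ^ k * (1 - x) ^ (n - k)
          = ((k:ℝ) * ((k:ℝ) - 1) * ((k:ℝ) - 2)) * (n.choose k : ℝ) * x ^ k * (1 - x) ^ (n - k)
            + 3 * (((k:ℝ) * ((k:ℝ) - 1)) * (n.choose k : ℝ) * x ^ k * (1 - x) ^ (n - k)) := by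
        intro k _; push_cast; ring
      rw [Finset.sum_congr rfl h, Finset.sum_add_distrib, ih, ← Finset.mul_sum, S2]
      push_cast; ring

lemma binom_term_nonneg {p : ℝ} (hp0 : 0 ≤ p) (hp1 : p ≤ 1) (n k : ℕ) :
    0 ≤ (n.choose k : ℝ) * p ^ k * (1 - p) ^ (n - k) := by
  have h1 : (0:ℝ) ≤ 1 - p := by linarith
  positivity

lemma binom_term_le_one {p : ℝ} (hp0 : 0 ≤ p) (hp1 : p ≤ 1) {n k : ℕ} (hk : k ≤ n) :
    (n.choose k : ℝ) * p ^ k * (1 - p) ^ (n - k) ≤ 1 := by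
  have h := S0 p n
  calc (n.choose k : ℝ) * p ^ k * (1 - p) ^ (n - k)
      = 1 * (n.choose k : ℝ) * p ^ k * (1 - p) ^ (n - k) := by ring
    _ ≤ ∑ j ∈ Finset.range (n + 1), (1:ℝ) * (n.choose j : ℝ) * p ^ j * (1 - p) ^ (n - j) := by
        apply Finset.single_le_sum (f := fun j => (1:ℝ) * (n.choose j : ℝ) * p ^ j * (1 - p) ^ (n - j))
        · intro j _
          have h2 := binom_term_nonneg hp0 hp1 n j
          linarith
        · exact Finset.mem_range.2 (Nat.lt_succ_of_le hk)
    _ = 1 := h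

lemma Scube_le {p : ℝ} (hp0 : 0 ≤ p) (hp1 : p ≤ 1) (n : ℕ) :
    ∑ k ∈ Finset.range (n + 1), ((k:ℝ)^3 + 1) * (n.choose k : ℝ) * p ^ k * (1 - p) ^ (n - k)
      ≤ (n:ℝ)^3 + 1 := by
  have hsplit : ∀ k ∈ Finset.range (n + 1),
      ((k:ℝ)^3 + 1) * (n.choose k : ℝ) * p ^ k * (1 - p) ^ (n - k)
      = ((k:ℝ) * ((k:ℝ) - 1) * ((k:ℝ) - 2)) * (n.choose k : ℝ) * p ^ k * (1 - p) ^ (n - k)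
        + 3 * (((k:ℝ) * ((k:ℝ) - 1)) * (n.choose k : ℝ) * p ^ k * (1 - p) ^ (n - k))
        + ((k:ℝ) * (n.choose k : ℝ) * p ^ k * (1 - p) ^ (n - k)
        + (1:ℝ) * (n.choose k : ℝ) * p ^ k * (1 - p) ^ (n - k)) := by
    intro k _; ring
  rw [Finset.sum_congr rfl hsplit, Finset.sum_add_distrib, Finset.sum_add_distrib,
    Finset.sum_add_distrib, ← Finset.mul_sum, S0, S1, S2, S3]
  have h1 : p ^ 2 ≤ 1 := pow_le_one₀ hp0 hp1
  have h2 : p ^ 3 ≤ 1 := pow_le_one₀ hp0 hp1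
  nlinarith [desc3_nonneg n, desc2_nonneg n, Nat.cast_nonneg (α := ℝ) n,
    mul_nonneg (desc3_nonneg n) (pow_nonneg hp0 3), mul_nonneg (desc2_nonneg n) (pow_nonneg hp0 2),
    mul_nonneg (Nat.cast_nonneg (α := ℝ) n) hp0]

/-- Master Fubini lemma for weighted sums of thinned probabilities. -/
lemma thinned_fubini (a : ℕ → ℝ) (ha0 : ∀ k, 0 ≤ a k)
    (Sa : Summable (fun n : ℕ => ((n:ℝ)^3 + 1) * a n))
    {p : ℝ} (hp0 : 0 < p) (hp1 : p ≤ 1) (w : ℕ → ℝ) (hw : ∀ k, |w k| ≤ (k:ℝ)^3 + 1) :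
    HasSum (fun k => w k * thinned a p k)
      (∑' n, a n * ∑ k ∈ Finset.range (n+1), w k * (n.choose k : ℝ) * p ^ k * (1-p) ^ (n-k)) := by
  have hp0' : (0:ℝ) ≤ p := le_of_lt hp0
  set T : ℕ → ℕ → ℝ := fun n k =>
    if k ≤ n then (n.choose k : ℝ) * p ^ k * (1 - p) ^ (n - k) * a n else 0 with hT
  have hT0 : ∀ n k, 0 ≤ T n k := by
    intro n k
    simp only [hT]
    split
    · exact mul_nonneg (binom_term_nonneg hp0' hp1 n k) (ha0 n)
    · exact le_refl 0
  have hTle : ∀ n k, T n k ≤ a n := by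
    intro n k
    simp only [hT]
    split
    · next h => exact mul_le_of_le_one_left (ha0 n) (binom_term_le_one hp0' hp1 h)
    · exact ha0 n
  have hTvanish : ∀ n k, k ∉ Finset.range (n+1) → T n k = 0 := by
    intro n k hk
    have h : ¬ k ≤ n := by
      rw [Finset.mem_range] at hk; omega
    simp [hT, h]
  have hSa1 : Summable a := by
    refine Sa.of_nonneg_of_le ha0 (fun n => ?_)
    nlinarith [ha0 n, pow_nonneg (Nat.cast_nonneg (α := ℝ) n) 3]
  have hTsummable : ∀ k, Summable (fun n => T n k) :=
    fun k => Summable.of_nonneg_of_le (fun n => hT0 n k) (fun n => hTle n k) hSa1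
  have hthineq : ∀ k, thinned a p k = ∑' n, T n k := fun k => rfl
  have hthin : ∀ k, HasSum (fun n => T n k) (thinned a p k) := by
    intro k
    rw [hthineq k]
    exact (hTsummable k).hasSum
  have hGsum : Summable (fun nk : ℕ × ℕ => ((nk.2:ℝ)^3 + 1) * T nk.1 nk.2) := by
    refine (summable_prod_of_nonneg ?_).2 ⟨?_, ?_⟩
    · intro nk
      exact mul_nonneg (by positivity) (hT0 _ _)
    · intro n
      apply summable_of_ne_finset_zero (s := Finset.range (n+1))
      intro k hk
      simp [hTvanish n k hk]
    · refine Summable.of_nonneg_of_le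
        (fun n => tsum_nonneg fun k : ℕ => mul_nonneg (by positivity) (hT0 _ _)) (fun n => ?_) Sa
      have heq : (∑' k : ℕ, ((k:ℝ)^3+1) * T n k) = ∑ k ∈ Finset.range (n+1), ((k:ℝ)^3+1) * T n k :=
        tsum_eq_sum (fun k hk => by simp [hTvanish n k hk])
      rw [heq]
      have heq2 : ∀ k ∈ Finset.range (n+1), ((k:ℝ)^3+1) * T n k
          = (((k:ℝ)^3+1) * (n.choose k : ℝ) * p ^ k * (1 - p) ^ (n - k)) * a n := by
        intro k hk
        rw [Finset.mem_range] at hk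
        have h : k ≤ n := by omega
        simp only [hT, if_pos h]
        ring
      rw [Finset.sum_congr rfl heq2, ← Finset.sum_mul]
      exact mul_le_mul_of_nonneg_right (Scube_le hp0' hp1 n) (ha0 n)
  have hGsum' : Summable (fun kn : ℕ × ℕ => ((kn.1:ℝ)^3 + 1) * T kn.2 kn.1) := by
    have h := hGsum.comp_injective (Equiv.prodComm ℕ ℕ).injective
    simpa [Function.comp_def] using h
  have hFsum : Summable (fun kn : ℕ × ℕ => w kn.1 * T kn.2 kn.1) := by
    apply Summable.of_norm_bounded hGsum'
    intro kn
    rw [Real.norm_eq_abs, abs_mul, abs_of_nonneg (hT0 _ _)]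
    exact mul_le_mul_of_nonneg_right (hw kn.1) (hT0 _ _)
  have hFsum2 : Summable (fun nk : ℕ × ℕ => w nk.2 * T nk.1 nk.2) := by
    have h := hFsum.comp_injective (Equiv.prodComm ℕ ℕ).injective
    simpa [Function.comp_def] using h
  have hsum2 : HasSum (fun k => w k * thinned a p k) (∑' kn : ℕ × ℕ, w kn.1 * T kn.2 kn.1) :=
    HasSum.prod_fiberwise hFsum.hasSum (fun k => (hthin k).mul_left (w k))
  convert hsum2 using 1
  have hswap : (∑' kn : ℕ × ℕ, w kn.1 * T kn.2 kn.1) = ∑' nk : ℕ × ℕ, w nk.2 * T nk.1 nk.2 := by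
    rw [← (Equiv.prodComm ℕ ℕ).tsum_eq (fun kn : ℕ × ℕ => w kn.1 * T kn.2 kn.1)]
    rfl
  rw [hswap, Summable.tsum_prod hFsum2]
  congr 1
  funext n
  have heq : (∑' k, w k * T n k) = ∑ k ∈ Finset.range (n+1), w k * T n k :=
    tsum_eq_sum (fun k hk => by simp [hTvanish n k hk])
  rw [heq]
  rw [Finset.mul_sum]
  apply Finset.sum_congr rfl
  intro k hk
  rw [Finset.mem_range] at hk
  have h : k ≤ n := by omega
  simp only [hT, if_pos h]
  ring

lemma wb_cube (k : ℕ) : (k:ℝ) ≤ (k:ℝ)^3 + 1 := by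
  rcases k with _ | m
  · norm_num
  · have h : (0:ℝ) ≤ (m:ℝ) := Nat.cast_nonneg m
    push_cast
    nlinarith [mul_nonneg (mul_nonneg h h) h, sq_nonneg (m:ℝ)]

lemma wb_cube2 (k : ℕ) : (k:ℝ) * ((k:ℝ) - 1) ≤ (k:ℝ)^3 + 1 := by
  rcases k with _ | m
  · norm_num
  · have h : (0:ℝ) ≤ (m:ℝ) := Nat.cast_nonneg m
    push_cast
    nlinarith [mul_nonneg (mul_nonneg h h) h, sq_nonneg (m:ℝ)]

lemma wb_cube3 (k : ℕ) : (k:ℝ) * ((k:ℝ) - 1) * ((k:ℝ) - 2) ≤ (k:ℝ)^3 + 1 := by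
  rcases k with _ | m
  · norm_num
  · have h : (0:ℝ) ≤ (m:ℝ) := Nat.cast_nonneg m
    push_cast
    nlinarith

section corollaries

variable {a : ℕ → ℝ} {m₁ m₂ m₃ : ℝ} {p : ℝ}

lemma Sa_cube (ha1 : HasSum a 1)
    (hm1 : HasSum (fun k : ℕ => (k : ℝ) * a k) m₁)
    (hm2 : HasSum (fun k : ℕ => (k : ℝ) * ((k : ℝ) - 1) * a k) m₂)
    (hm3 : HasSum (fun k : ℕ => (k : ℝ) * ((k : ℝ) - 1) * ((k : ℝ) - 2) * a k) m₃) :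
    Summable (fun n : ℕ => ((n:ℝ)^3 + 1) * a n) := by
  have h := ((hm3.summable.add (hm2.summable.mul_left 3)).add hm1.summable).add ha1.summable
  refine h.congr (fun n => ?_)
  push_cast
  ring

lemma thinned_hasSum_one (ha0 : ∀ k, 0 ≤ a k)
    (Sa : Summable (fun n : ℕ => ((n:ℝ)^3 + 1) * a n)) (ha1 : HasSum a 1)
    (hp0 : 0 < p) (hp1 : p ≤ 1) :
    HasSum (thinned a p) 1 := by
  have h := thinned_fubini a ha0 Sa hp0 hp1 (fun _ => (1:ℝ))
    (fun k => by
      rw [abs_one]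
      have h2 : (0:ℝ) ≤ (k:ℝ)^3 := by positivity
      linarith)
  have hval : (∑' n : ℕ, a n * ∑ k ∈ Finset.range (n+1),
      (1:ℝ) * (n.choose k : ℝ) * p ^ k * (1-p) ^ (n-k)) = 1 := by
    have hc : ∀ n : ℕ, a n * ∑ k ∈ Finset.range (n+1),
        (1:ℝ) * (n.choose k : ℝ) * p ^ k * (1-p) ^ (n-k) = a n := by
      intro n; rw [S0]; ring
    rw [tsum_congr hc, ha1.tsum_eq]
  rw [hval] at h
  simpa using h

lemma thinned_hasSum_mom1 (ha0 : ∀ k, 0 ≤ a k)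
    (Sa : Summable (fun n : ℕ => ((n:ℝ)^3 + 1) * a n))
    (hm1 : HasSum (fun k : ℕ => (k : ℝ) * a k) m₁)
    (hp0 : 0 < p) (hp1 : p ≤ 1) :
    HasSum (fun k : ℕ => (k:ℝ) * thinned a p k) (p * m₁) := by
  have h := thinned_fubini a ha0 Sa hp0 hp1 (fun k => (k:ℝ))
    (fun k => by rw [abs_of_nonneg (Nat.cast_nonneg k)]; exact wb_cube k)
  have hval : (∑' n : ℕ, a n * ∑ k ∈ Finset.range (n+1),
      (k:ℝ) * (n.choose k : ℝ) * p ^ k * (1-p) ^ (n-k)) = p * m₁ := by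
    have hc : ∀ n : ℕ, a n * ∑ k ∈ Finset.range (n+1),
        (k:ℝ) * (n.choose k : ℝ) * p ^ k * (1-p) ^ (n-k) = p * ((n:ℝ) * a n) := by
      intro n; rw [S1]; ring
    rw [tsum_congr hc, tsum_mul_left, hm1.tsum_eq]
  rw [hval] at h
  exact h

lemma thinned_hasSum_mom2 (ha0 : ∀ k, 0 ≤ a k)
    (Sa : Summable (fun n : ℕ => ((n:ℝ)^3 + 1) * a n))
    (hm2 : HasSum (fun k : ℕ => (k : ℝ) * ((k : ℝ) - 1) * a k) m₂)
    (hp0 : 0 < p) (hp1 : p ≤ 1) :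
    HasSum (fun k : ℕ => (k:ℝ) * ((k:ℝ) - 1) * thinned a p k) (p^2 * m₂) := by
  have h := thinned_fubini a ha0 Sa hp0 hp1 (fun k => (k:ℝ) * ((k:ℝ) - 1))
    (fun k => by rw [abs_of_nonneg (desc2_nonneg k)]; exact wb_cube2 k)
  have hval : (∑' n : ℕ, a n * ∑ k ∈ Finset.range (n+1),
      ((k:ℝ) * ((k:ℝ) - 1)) * (n.choose k : ℝ) * p ^ k * (1-p) ^ (n-k)) = p^2 * m₂ := by
    have hc : ∀ n : ℕ, a n * ∑ k ∈ Finset.range (n+1),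
        ((k:ℝ) * ((k:ℝ) - 1)) * (n.choose k : ℝ) * p ^ k * (1-p) ^ (n-k)
        = p^2 * ((n:ℝ) * ((n:ℝ) - 1) * a n) := by
      intro n; rw [S2]; ring
    rw [tsum_congr hc, tsum_mul_left, hm2.tsum_eq]
  rw [hval] at h
  exact h

lemma thinned_hasSum_mom3 (ha0 : ∀ k, 0 ≤ a k)
    (Sa : Summable (fun n : ℕ => ((n:ℝ)^3 + 1) * a n))
    (hm3 : HasSum (fun k : ℕ => (k : ℝ) * ((k : ℝ) - 1) * ((k : ℝ) - 2) * a k) m₃)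
    (hp0 : 0 < p) (hp1 : p ≤ 1) :
    HasSum (fun k : ℕ => (k:ℝ) * ((k:ℝ) - 1) * ((k:ℝ) - 2) * thinned a p k) (p^3 * m₃) := by
  have h := thinned_fubini a ha0 Sa hp0 hp1 (fun k => (k:ℝ) * ((k:ℝ) - 1) * ((k:ℝ) - 2))
    (fun k => by rw [abs_of_nonneg (desc3_nonneg k)]; exact wb_cube3 k)
  have hval : (∑' n : ℕ, a n * ∑ k ∈ Finset.range (n+1),
      ((k:ℝ) * ((k:ℝ) - 1) * ((k:ℝ) - 2)) * (n.choose k : ℝ) * p ^ k * (1-p) ^ (n-k)) = p^3 * m₃ := by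
    have hc : ∀ n : ℕ, a n * ∑ k ∈ Finset.range (n+1),
        ((k:ℝ) * ((k:ℝ) - 1) * ((k:ℝ) - 2)) * (n.choose k : ℝ) * p ^ k * (1-p) ^ (n-k)
        = p^3 * ((n:ℝ) * ((n:ℝ) - 1) * ((n:ℝ) - 2) * a n) := by
      intro n; rw [S3]; ring
    rw [tsum_congr hc, tsum_mul_left, hm3.tsum_eq]
  rw [hval] at h
  exact h

lemma thinned_hasSum_eval (ha0 : ∀ k, 0 ≤ a k)
    (Sa : Summable (fun n : ℕ => ((n:ℝ)^3 + 1) * a n))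
    (hp0 : 0 < p) (hp1 : p ≤ 1) {s : ℝ} (hs0 : 0 ≤ s) (hs1 : s ≤ 1) :
    HasSum (fun k : ℕ => s^k * thinned a p k) (pgfp a p s) := by
  have h := thinned_fubini a ha0 Sa hp0 hp1 (fun k => s^k)
    (fun k => by
      rw [abs_of_nonneg (pow_nonneg hs0 k)]
      have h1 : s ^ k ≤ 1 := pow_le_one₀ hs0 hs1
      have h2 : (0:ℝ) ≤ (k:ℝ)^3 := by positivity
      linarith)
  have hval : (∑' n : ℕ, a n * ∑ k ∈ Finset.range (n+1),
      s^k * (n.choose k : ℝ) * p ^ k * (1-p) ^ (n-k)) = pgfp a p s := by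
    rw [pgfp, pgf]
    apply tsum_congr
    intro n
    rw [Sgeom]
  rw [hval] at h
  exact h

end corollaries

section keybounds

variable {a : ℕ → ℝ} {m₁ m₂ m₃ : ℝ} {p c : ℝ}

lemma thinned_nonneg (ha0 : ∀ k, 0 ≤ a k) (hp0 : 0 ≤ p) (hp1 : p ≤ 1) (k : ℕ) :
    0 ≤ thinned a p k := by
  rw [thinned]
  refine tsum_nonneg (fun n => ?_)
  split
  · exact mul_nonneg (binom_term_nonneg hp0 hp1 n k) (ha0 n)
  · exact le_refl 0

/-- The fixed-point equation bounds: `p²m₂ε/2 - p³m₃ε²/6 ≤ pm₁ - 1 ≤ p²m₂ε/2`. -/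
lemma eps_bounds (ha0 : ∀ k, 0 ≤ a k) (ha1 : HasSum a 1)
    (Sa : Summable (fun n : ℕ => ((n:ℝ)^3 + 1) * a n))
    (hm1 : HasSum (fun k : ℕ => (k : ℝ) * a k) m₁)
    (hm2 : HasSum (fun k : ℕ => (k : ℝ) * ((k : ℝ) - 1) * a k) m₂)
    (hm3 : HasSum (fun k : ℕ => (k : ℝ) * ((k : ℝ) - 1) * ((k : ℝ) - 2) * a k) m₃)
    (hp0 : 0 < p) (hp1 : p ≤ 1) (hc0 : 0 ≤ c) (hc1 : c < 1)
    (hfix : pgfp a p c = c) :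
    p^2*m₂*(1-c)/2 - p^3*m₃*(1-c)^2/6 ≤ p*m₁ - 1 ∧ p*m₁ - 1 ≤ p^2*m₂*(1-c)/2 := by
  set ε : ℝ := 1 - c with hε
  have hε0 : 0 < ε := by simp [hε]; linarith
  have hε1 : ε ≤ 1 := by simp [hε]; linarith
  have hε0' : 0 ≤ ε := le_of_lt hε0
  have hc : c = 1 - ε := by simp [hε]
  have hPnn : ∀ k, 0 ≤ thinned a p k := thinned_nonneg ha0 (le_of_lt hp0) hp1
  have hS1 := thinned_hasSum_one ha0 Sa ha1 hp0 hp1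
  have hM1 := thinned_hasSum_mom1 ha0 Sa hm1 hp0 hp1
  have hM2 := thinned_hasSum_mom2 ha0 Sa hm2 hp0 hp1
  have hM3 := thinned_hasSum_mom3 ha0 Sa hm3 hp0 hp1
  have hEv := thinned_hasSum_eval ha0 Sa hp0 hp1 hc0 (le_of_lt hc1)
  rw [hfix] at hEv
  -- HasSum (fun k => (1 - c^k) * P k) (1 - c)
  have hA : HasSum (fun k : ℕ => (1 - c^k) * thinned a p k) ε := by
    have h := hS1.sub hEv
    rw [hε]
    refine h.congr_fun (fun k => ?_)
    ring
  -- lower comparison function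
  have hLo : HasSum (fun k : ℕ => (ε * ((k:ℝ) * thinned a p k)
      - (ε^2/2) * ((k:ℝ) * ((k:ℝ)-1) * thinned a p k)))
      (ε * (p * m₁) - (ε^2/2) * (p^2 * m₂)) := (hM1.mul_left ε).sub (hM2.mul_left (ε^2/2))
  have hUp : HasSum (fun k : ℕ => (ε * ((k:ℝ) * thinned a p k)
      - (ε^2/2) * ((k:ℝ) * ((k:ℝ)-1) * thinned a p k)
      + (ε^3/6) * ((k:ℝ) * ((k:ℝ)-1) * ((k:ℝ)-2) * thinned a p k)))
      (ε * (p * m₁) - (ε^2/2) * (p^2 * m₂) + (ε^3/6) * (p^3 * m₃)) :=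
    ((hM1.mul_left ε).sub (hM2.mul_left (ε^2/2))).add (hM3.mul_left (ε^3/6))
  have hAlow : ε * (p * m₁) - (ε^2/2) * (p^2 * m₂) ≤ ε := by
    refine hasSum_le (fun k => ?_) hLo hA
    have hb := bin2 hε0' hε1 k
    have hP := hPnn k
    have hck : c ^ k = (1-ε)^k := by rw [hc]
    rw [hck]
    nlinarith [mul_le_mul_of_nonneg_right hb hP]
  have hAup : ε ≤ ε * (p * m₁) - (ε^2/2) * (p^2 * m₂) + (ε^3/6) * (p^3 * m₃) := by
    refine hasSum_le (fun k => ?_) hA hUp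
    have hb := bin3 hε0' hε1 k
    have hP := hPnn k
    have hck : c ^ k = (1-ε)^k := by rw [hc]
    rw [hck]
    nlinarith [mul_le_mul_of_nonneg_right hb hP]
  constructor
  · apply le_of_mul_le_mul_right _ hε0
    nlinarith [hAup]
  · apply le_of_mul_le_mul_right _ hε0
    nlinarith [hAlow]

end keybounds

section speedbounds

variable {a : ℕ → ℝ} {m₁ m₂ m₃ : ℝ} {p c : ℝ}

set_option maxHeartbeats 2000000 in
lemma speed_bounds (ha0 : ∀ k, 0 ≤ a k) (ha1 : HasSum a 1)
    (Sa : Summable (fun n : ℕ => ((n:ℝ)^3 + 1) * a n))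
    (hm1 : HasSum (fun k : ℕ => (k : ℝ) * a k) m₁)
    (hm2 : HasSum (fun k : ℕ => (k : ℝ) * ((k : ℝ) - 1) * a k) m₂)
    (hm3 : HasSum (fun k : ℕ => (k : ℝ) * ((k : ℝ) - 1) * ((k : ℝ) - 2) * a k) m₃)
    (hp0 : 0 < p) (hp1 : p ≤ 1) (hc0 : 0 ≤ c) (hc1 : c < 1)
    (hfix : pgfp a p c = c) :
    (p^2*m₂/6 - p^3*m₃*(1-c)/6)/(2-(1-c))
      ≤ (∑' k : ℕ, (((k:ℝ) - 1) / ((k:ℝ) + 1)) * thinned a p k * ((1 - c ^ (k + 1)) / (1 - c ^ 2)))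
        / (1-c)^2
    ∧ (∑' k : ℕ, (((k:ℝ) - 1) / ((k:ℝ) + 1)) * thinned a p k * ((1 - c ^ (k + 1)) / (1 - c ^ 2)))
        / (1-c)^2
      ≤ (p^2*m₂/6 + p^3*m₃*(1-c)/12)/(2-(1-c)) := by
  obtain ⟨hK1, hK2⟩ := eps_bounds ha0 ha1 Sa hm1 hm2 hm3 hp0 hp1 hc0 hc1 hfix
  set ε : ℝ := 1 - c with hε
  have hε0 : 0 < ε := by simp [hε]; linarith
  have hε1 : ε ≤ 1 := by simp [hε]; linarith
  have hε0' : 0 ≤ ε := le_of_lt hε0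
  have hc : c = 1 - ε := by simp [hε]
  have hc1' : c ≤ 1 := le_of_lt hc1
  have hPnn : ∀ k, 0 ≤ thinned a p k := thinned_nonneg ha0 (le_of_lt hp0) hp1
  have hS1 := thinned_hasSum_one ha0 Sa ha1 hp0 hp1
  have hM1 := thinned_hasSum_mom1 ha0 Sa hm1 hp0 hp1
  have hM2 := thinned_hasSum_mom2 ha0 Sa hm2 hp0 hp1
  have hM3 := thinned_hasSum_mom3 ha0 Sa hm3 hp0 hp1
  have hEv := thinned_hasSum_eval ha0 Sa hp0 hp1 hc0 hc1'
  rw [hfix] at hEv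
  -- the φ-weight
  set φw : ℕ → ℝ := fun k => (1 - c^(k+1))/((k:ℝ)+1) with hφw
  have hφnn : ∀ k, 0 ≤ φw k := by
    intro k
    apply div_nonneg
    · have := pow_le_one₀ hc0 hc1' (n := k+1); linarith
    · positivity
  have hφle1 : ∀ k, φw k ≤ 1 := by
    intro k
    rw [hφw]
    rw [div_le_one (by positivity)]
    have h1 : 0 ≤ c^(k+1) := pow_nonneg hc0 _
    have h2 : (0:ℝ) ≤ (k:ℝ) := Nat.cast_nonneg k
    linarith
  have hBsummable : Summable (fun k : ℕ => φw k * thinned a p k) := by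
    refine (thinned_fubini a ha0 Sa hp0 hp1 φw (fun k => ?_)).summable
    rw [abs_of_nonneg (hφnn k)]
    have h2 : (0:ℝ) ≤ (k:ℝ)^3 := by positivity
    linarith [hφle1 k]
  set B : ℝ := ∑' k : ℕ, φw k * thinned a p k with hBdef
  have hBs : HasSum (fun k : ℕ => φw k * thinned a p k) B := hBsummable.hasSum
  -- scalar bounds for φw
  have hφub : ∀ k : ℕ, φw k ≤ ε - (k:ℝ)*ε^2/2 + (k:ℝ)*((k:ℝ)-1)*ε^3/6 := by
    intro k
    have hb := bin3 hε0' hε1 (k+1)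
    push_cast at hb
    simp only [hφw]
    have hck : c ^ (k+1) = (1-ε)^(k+1) := by rw [hc]
    rw [hck, div_le_iff₀ (by positivity : (0:ℝ) < (k:ℝ)+1)]
    nlinarith [hb]
  have hφlb : ∀ k : ℕ, ε - (k:ℝ)*ε^2/2 + (k:ℝ)*((k:ℝ)-1)*ε^3/6
      - (k:ℝ)*((k:ℝ)-1)*((k:ℝ)-2)*ε^4/24 ≤ φw k := by
    intro k
    have hb := bin4 hε0' hε1 (k+1)
    push_cast at hb
    simp only [hφw]
    have hck : c ^ (k+1) = (1-ε)^(k+1) := by rw [hc]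
    rw [hck, le_div_iff₀ (by positivity : (0:ℝ) < (k:ℝ)+1)]
    nlinarith [hb]
  -- B bounds
  have hBup : B ≤ ε - (ε^2/2)*(p*m₁) + (ε^3/6)*(p^2*m₂) := by
    have hcomb : HasSum (fun k : ℕ => ε * thinned a p k
        - (ε^2/2) * ((k:ℝ) * thinned a p k)
        + (ε^3/6) * ((k:ℝ) * ((k:ℝ)-1) * thinned a p k))
        (ε * 1 - (ε^2/2)*(p*m₁) + (ε^3/6)*(p^2*m₂)) :=
      ((hS1.mul_left ε).sub (hM1.mul_left (ε^2/2))).add (hM2.mul_left (ε^3/6))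
    have h := hasSum_le (fun k => ?_) hBs hcomb
    · linarith [h]
    · have := mul_le_mul_of_nonneg_right (hφub k) (hPnn k)
      nlinarith [this]
  have hBlo : ε - (ε^2/2)*(p*m₁) + (ε^3/6)*(p^2*m₂) - (ε^4/24)*(p^3*m₃) ≤ B := by
    have hcomb : HasSum (fun k : ℕ => ε * thinned a p k
        - (ε^2/2) * ((k:ℝ) * thinned a p k)
        + (ε^3/6) * ((k:ℝ) * ((k:ℝ)-1) * thinned a p k)
        - (ε^4/24) * ((k:ℝ) * ((k:ℝ)-1) * ((k:ℝ)-2) * thinned a p k))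
        (ε * 1 - (ε^2/2)*(p*m₁) + (ε^3/6)*(p^2*m₂) - (ε^4/24)*(p^3*m₃)) :=
      (((hS1.mul_left ε).sub (hM1.mul_left (ε^2/2))).add (hM2.mul_left (ε^3/6))).sub
        (hM3.mul_left (ε^4/24))
    have h := hasSum_le (fun k => ?_) hcomb hBs
    · linarith [h]
    · have := mul_le_mul_of_nonneg_right (hφlb k) (hPnn k)
      nlinarith [this]
  -- the speed closed form
  have h12 : 1 - c^2 = ε*(2-ε) := by rw [hc]; ring
  have hdpos : 0 < ε*(2-ε) := by nlinarith
  have hq2pos : 0 < 1 - c^2 := by rw [h12]; exact hdpos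
  have hcc : HasSum (fun k : ℕ => (1 - c^(k+1)) * thinned a p k) (1 - c^2) := by
    have h := hS1.sub (hEv.mul_left c)
    have h2 : (1:ℝ) - c * c = 1 - c^2 := by ring
    rw [h2] at h
    refine h.congr_fun (fun k => ?_)
    ring
  have hVsum : HasSum (fun k : ℕ => (((k:ℝ) - 1) / ((k:ℝ) + 1)) * thinned a p k
      * ((1 - c ^ (k + 1)) / (1 - c ^ 2)))
      ((1/(1-c^2)) * (1 - c^2) - (2/(1-c^2)) * B) := by
    have h := (hcc.mul_left (1/(1-c^2))).sub (hBs.mul_left (2/(1-c^2)))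
    refine h.congr_fun (fun k => ?_)
    rw [hφw]
    have hk1 : ((k:ℝ)+1) ≠ 0 := by positivity
    field_simp
    ring
  set V : ℝ := ∑' k : ℕ, (((k:ℝ) - 1) / ((k:ℝ) + 1)) * thinned a p k
      * ((1 - c ^ (k + 1)) / (1 - c ^ 2)) with hVdef
  have hV : V = (1/(1-c^2)) * (1 - c^2) - (2/(1-c^2)) * B := hVsum.tsum_eq
  have hVN : V * (ε*(2-ε)) = ε*(2-ε) - 2*B := by
    have hne : ε*(2-ε) ≠ 0 := ne_of_gt hdpos
    have hne2 : 2 - ε ≠ 0 := ne_of_gt (by linarith)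
    rw [hV, h12]
    field_simp
  constructor
  · rw [div_le_div_iff₀ (by linarith : (0:ℝ) < 2-ε) (by positivity : (0:ℝ) < ε^2)]
    apply le_of_mul_le_mul_right _ hε0
    have hrw : V * (2-ε) * ε = V * (ε*(2-ε)) := by ring
    rw [hrw, hVN]
    nlinarith [hBup, mul_le_mul_of_nonneg_right hK1 (sq_nonneg ε)]
  · rw [div_le_div_iff₀ (by positivity : (0:ℝ) < ε^2) (by linarith : (0:ℝ) < 2-ε)]
    apply le_of_mul_le_mul_right _ hε0
    have hrw : V * (2-ε) * ε = V * (ε*(2-ε)) := by ring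
    rw [hrw, hVN]
    nlinarith [hBlo, mul_le_mul_of_nonneg_right hK2 (sq_nonneg ε)]

end speedbounds

section epstendsto

variable {a : ℕ → ℝ} {m₁ : ℝ}

set_option maxHeartbeats 1000000 in
lemma eps_tendsto (ha0 : ∀ k, 0 ≤ a k) (ha1 : HasSum a 1)
    (hm1 : HasSum (fun k : ℕ => (k:ℝ) * a k) m₁) (h1m : 1 < m₁)
    {K : ℕ} (hK2 : 2 ≤ K) (hKpos : 0 < a K)
    (q : ℝ → ℝ)
    (hq : ∀ p ∈ Set.Ioc (1/m₁) 1, q p ∈ Set.Ico (0:ℝ) 1 ∧ pgfp a p (q p) = q p) :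
    Tendsto (fun p => 1 - q p) (𝓝[>] (1/m₁)) (𝓝 0) := by
  have hm1pos : (0:ℝ) < m₁ := by linarith
  set pc : ℝ := 1/m₁ with hpcdef
  have hpcpos : 0 < pc := by positivity
  have hpc1 : pc < 1 := by rw [hpcdef]; rw [div_lt_one hm1pos]; exact h1m
  set H : ℝ → ℝ := fun x => ∑' k : ℕ, a k * ∑ j ∈ Finset.range k, (1-x)^j with hHdef
  have hSsum : ∀ x : ℝ, 0 ≤ x → x ≤ 1 →
      Summable (fun k : ℕ => a k * ∑ j ∈ Finset.range k, (1-x)^j) := by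
    intro x hx0 hx1
    refine Summable.of_nonneg_of_le (fun k => ?_) (fun k => ?_) hm1.summable
    · exact mul_nonneg (ha0 k) (Finset.sum_nonneg (fun j _ => pow_nonneg (by linarith) j))
    · have hs : ∑ j ∈ Finset.range k, (1-x)^j ≤ (k:ℝ) := by
        calc ∑ j ∈ Finset.range k, (1-x)^j
            ≤ ∑ j ∈ Finset.range k, (1:ℝ) :=
              Finset.sum_le_sum (fun j _ => pow_le_one₀ (by linarith) (by linarith))
          _ = k := by simp
      calc a k * ∑ j ∈ Finset.range k, (1-x)^j ≤ a k * k :=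
            mul_le_mul_of_nonneg_left hs (ha0 k)
        _ = (k:ℝ) * a k := mul_comm _ _
  have hHanti : ∀ x y : ℝ, 0 ≤ x → x ≤ y → y ≤ 1 → H y ≤ H x := by
    intro x y hx0 hxy hy1
    refine Summable.tsum_le_tsum (fun k => ?_) (hSsum y (by linarith) hy1) (hSsum x hx0 (by linarith))
    refine mul_le_mul_of_nonneg_left (Finset.sum_le_sum (fun j _ => ?_)) (ha0 k)
    exact pow_le_pow_left₀ (by linarith) (by linarith) j
  have hHlt : ∀ x : ℝ, 0 < x → x ≤ 1 → H x < m₁ := by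
    intro x hx0 hx1
    have hg : HasSum (fun k : ℕ => a k * (k:ℝ)) m₁ := by
      refine hm1.congr_fun (fun k => mul_comm _ _)
    have hle : ∀ k : ℕ, a k * ∑ j ∈ Finset.range k, (1-x)^j ≤ a k * (k:ℝ) := by
      intro k
      refine mul_le_mul_of_nonneg_left ?_ (ha0 k)
      calc ∑ j ∈ Finset.range k, (1-x)^j
          ≤ ∑ j ∈ Finset.range k, (1:ℝ) :=
            Finset.sum_le_sum (fun j _ => pow_le_one₀ (by linarith) (by linarith))
        _ = k := by simp
    have hstrict : a K * ∑ j ∈ Finset.range K, (1-x)^j < a K * (K:ℝ) := by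
      refine mul_lt_mul_of_pos_left ?_ hKpos
      calc ∑ j ∈ Finset.range K, (1-x)^j
          < ∑ j ∈ Finset.range K, (1:ℝ) := by
            refine Finset.sum_lt_sum (fun j _ => pow_le_one₀ (by linarith) (by linarith)) ?_
            refine ⟨1, Finset.mem_range.2 (by omega), ?_⟩
            rw [pow_one]; linarith
        _ = K := by simp
    have h := Summable.tsum_lt_tsum hle hstrict (hSsum x (le_of_lt hx0) hx1) hg.summable
    rw [hg.tsum_eq] at h
    exact h
  have hHpos : ∀ x : ℝ, 0 < x → x ≤ 1 → 0 < H x := by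
    intro x hx0 hx1
    have hs1 : (1:ℝ) ≤ ∑ j ∈ Finset.range K, (1-x)^j := by
      have h := Finset.single_le_sum (f := fun j => (1-x)^j)
        (fun j _ => pow_nonneg (by linarith) j) (Finset.mem_range.2 (by omega : 0 < K))
      simpa using h
    have h2 : a K * 1 ≤ a K * ∑ j ∈ Finset.range K, (1-x)^j :=
      mul_le_mul_of_nonneg_left hs1 (ha0 K)
    have h3 : a K * ∑ j ∈ Finset.range K, (1-x)^j ≤ H x := by
      refine Summable.le_tsum (hSsum x (le_of_lt hx0) hx1) K (fun j _ => ?_)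
      exact mul_nonneg (ha0 j) (Finset.sum_nonneg (fun i _ => pow_nonneg (by linarith) i))
    nlinarith
  have hHeq : ∀ p ∈ Set.Ioc pc 1, H (p * (1 - q p)) = 1/p := by
    intro p hp
    obtain ⟨⟨hc0, hc1⟩, hfix⟩ := hq p hp
    have hp0 : 0 < p := lt_trans hpcpos hp.1
    have hp1 : p ≤ 1 := hp.2
    set c : ℝ := q p with hcdef
    set ε : ℝ := 1 - c with hεdef
    have hε0 : 0 < ε := by rw [hεdef]; linarith
    have hε1 : ε ≤ 1 := by rw [hεdef]; linarith
    set x : ℝ := p * ε with hxdef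
    have hx0 : 0 < x := mul_pos hp0 hε0
    have hx1 : x ≤ 1 := by
      calc x = p * ε := hxdef
        _ ≤ 1 * 1 := mul_le_mul hp1 hε1 (le_of_lt hε0) (by norm_num)
        _ = 1 := by norm_num
    have hpow : HasSum (fun k : ℕ => a k * (1-x)^k) (pgf a (1-x)) := by
      have hsum : Summable (fun k : ℕ => a k * (1-x)^k) := by
        refine Summable.of_nonneg_of_le (fun k => ?_) (fun k => ?_) ha1.summable
        · exact mul_nonneg (ha0 k) (pow_nonneg (by linarith) k)
        · exact mul_le_of_le_one_right (ha0 k) (pow_le_one₀ (by linarith) (by linarith))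
      have := hsum.hasSum
      rwa [pgf]
    have hxH : x * H x = 1 - pgf a (1-x) := by
      calc x * H x = ∑' k : ℕ, x * (a k * ∑ j ∈ Finset.range k, (1-x)^j) := by
            rw [hHdef]; exact (tsum_mul_left).symm
        _ = ∑' k : ℕ, (a k - a k * (1-x)^k) := by
            refine tsum_congr (fun k => ?_)
            have hg := geom_sum_mul (1-x) k
            linear_combination (-(a k)) * hg
        _ = 1 - pgf a (1-x) := (ha1.sub hpow).tsum_eq
    have harg : (1:ℝ) - x = p * c + 1 - p := by rw [hxdef, hεdef]; ring
    have hfix2 : pgf a (1-x) = c := by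
      rw [harg]
      exact hfix
    rw [hfix2] at hxH
    -- x * H x = 1 - c = ε
    have hxH2 : (p * ε) * H x = ε := by rw [← hxdef, hxH, hεdef]
    have hH : H x * p = 1 := by
      have h2 : (H x * p) * ε = 1 * ε := by linarith [hxH2]
      exact mul_right_cancel₀ (ne_of_gt hε0) h2
    rw [eq_div_iff (ne_of_gt hp0)]
    exact hH
  -- the tendsto statement
  rw [Metric.tendsto_nhds]
  intro δ hδ
  set η : ℝ := min 1 (δ * pc) with hηdef
  have hη0 : 0 < η := lt_min one_pos (mul_pos hδ hpcpos)
  have hη1 : η ≤ 1 := min_le_left _ _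
  have hHη : H η < m₁ := hHlt η hη0 hη1
  have hHηpos : 0 < H η := hHpos η hη0 hη1
  set p₀ : ℝ := min 1 (1/(H η)) with hp₀def
  have hpcp₀ : pc < p₀ := by
    refine lt_min hpc1 ?_
    rw [hpcdef, div_lt_div_iff₀ hm1pos hHηpos]
    linarith
  filter_upwards [Ioo_mem_nhdsGT_of_mem (show pc ∈ Set.Ico pc p₀ from ⟨le_refl _, hpcp₀⟩)]
    with p hp
  have hp0 : 0 < p := lt_trans hpcpos hp.1
  have hp1 : p ≤ 1 := le_of_lt (lt_of_lt_of_le hp.2 (min_le_left _ _))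
  have hpIoc : p ∈ Set.Ioc pc 1 := ⟨hp.1, hp1⟩
  obtain ⟨⟨hc0, hc1⟩, hfix⟩ := hq p hpIoc
  have hε0 : 0 < 1 - q p := by linarith
  have hε1 : 1 - q p ≤ 1 := by linarith
  have hx0 : 0 < p * (1 - q p) := mul_pos hp0 hε0
  have hx1 : p * (1 - q p) ≤ 1 := by
    calc p * (1 - q p) ≤ 1 * 1 := mul_le_mul hp1 hε1 (le_of_lt hε0) (by norm_num)
      _ = 1 := by norm_num
  have hH1p : H η < 1/p := by
    have hpp : p < 1/(H η) := lt_of_lt_of_le hp.2 (min_le_right _ _)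
    rw [lt_div_iff₀ hp0]
    rw [lt_div_iff₀ hHηpos] at hpp
    linarith
  have hxη : p * (1 - q p) < η := by
    by_contra hcon
    push_neg at hcon
    have h1 : H (p * (1 - q p)) ≤ H η := hHanti η (p * (1 - q p)) (le_of_lt hη0) hcon hx1
    rw [hHeq p hpIoc] at h1
    linarith
  have hfin : 1 - q p < δ := by
    have h1 : (1 - q p) * p < η := by rw [mul_comm]; exact hxη
    have h2 : 1 - q p < η / p := (lt_div_iff₀ hp0).2 h1
    have h3 : η / p < η / pc := div_lt_div_of_pos_left hη0 hpcpos hp.1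
    have h4 : η / pc ≤ δ := by
      rw [div_le_iff₀ hpcpos]
      exact min_le_right _ _
    linarith
  rw [Real.dist_eq, sub_zero, abs_of_nonneg (by linarith : (0:ℝ) ≤ 1 - q p)]
  exact hfin

end epstendsto

set_option maxHeartbeats 2000000 in
/-- The effective speed of random walk on a barely supercritical Galton–Watson tree
satisfies `lim_{p ↓ p_c} v(p)/(p - p_c)² = m₁⁴/(3m₂)`. -/
theorem speed_asymptotics
    (a : ℕ → ℝ) (m₁ m₂ m₃ pc : ℝ) (q : ℝ → ℝ)
    (ha0 : ∀ k, 0 ≤ a k) (ha1 : HasSum a 1)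
    (hm1 : HasSum (fun k : ℕ => (k : ℝ) * a k) m₁) (h1m : 1 < m₁)
    (hm2 : HasSum (fun k : ℕ => (k : ℝ) * ((k : ℝ) - 1) * a k) m₂)
    (hm3 : HasSum (fun k : ℕ => (k : ℝ) * ((k : ℝ) - 1) * ((k : ℝ) - 2) * a k) m₃)
    (hpc : pc = 1 / m₁)
    (hq : ∀ p ∈ Set.Ioc pc 1, q p ∈ Set.Ico (0 : ℝ) 1 ∧ pgfp a p (q p) = q p) :
    Tendsto (fun p => speedLPP a q p / (p - pc) ^ 2) (𝓝[>] pc)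
      (𝓝 (m₁ ^ 4 / (3 * m₂))) := by
  have hm1pos : (0:ℝ) < m₁ := by linarith
  have hm1ne : m₁ ≠ 0 := ne_of_gt hm1pos
  have hpcpos : 0 < pc := by rw [hpc]; positivity
  have hpc1 : pc < 1 := by rw [hpc, div_lt_one hm1pos]; exact h1m
  have hm1pc : m₁ * pc = 1 := by rw [hpc]; field_simp
  have Sa := Sa_cube ha1 hm1 hm2 hm3
  -- witness K ≥ 2 with a K > 0
  have hKex : ∃ K, 2 ≤ K ∧ 0 < a K := by
    by_contra hcon
    push_neg at hcon
    have hz : ∀ k, 2 ≤ k → a k = 0 := fun k hk => le_antisymm (hcon k hk) (ha0 k)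
    have h1 : HasSum (fun k : ℕ => (k:ℝ) * a k) (((1:ℕ):ℝ) * a 1) := by
      refine hasSum_single 1 (fun b hb => ?_)
      rcases Nat.lt_or_ge b 2 with h | h
      · have hb0 : b = 0 := by omega
        subst hb0; simp
      · rw [hz b h]; ring
    have heq : m₁ = ((1:ℕ):ℝ) * a 1 := hm1.unique h1
    have hle : a 1 ≤ 1 := le_hasSum ha1 1 (fun j _ => ha0 j)
    push_cast at heq
    linarith
  obtain ⟨K, hK2, hKpos⟩ := hKex
  have hm2pos : 0 < m₂ := by
    have hle := le_hasSum hm2 K (fun j _ => mul_nonneg (desc2_nonneg j) (ha0 j))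
    have hK2' : (2:ℝ) ≤ (K:ℝ) := by exact_mod_cast hK2
    have hKK : (0:ℝ) < (K:ℝ)*((K:ℝ)-1) := by nlinarith
    nlinarith [mul_pos hKK hKpos]
  have hm2ne : m₂ ≠ 0 := ne_of_gt hm2pos
  -- ε → 0
  have hεto0 : Tendsto (fun p => 1 - q p) (𝓝[>] pc) (𝓝 0) := by
    have h := eps_tendsto ha0 ha1 hm1 h1m hK2 hKpos q (by rw [← hpc]; exact hq)
    rwa [← hpc] at h
  have hmem : ∀ᶠ p in 𝓝[>] pc, p ∈ Set.Ioc pc 1 := by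
    filter_upwards [Ioo_mem_nhdsGT_of_mem (show pc ∈ Set.Ico pc 1 from ⟨le_refl _, hpc1⟩)]
      with p hp
    exact ⟨hp.1, le_of_lt hp.2⟩
  have htp : Tendsto (fun p : ℝ => p) (𝓝[>] pc) (𝓝 pc) := tendsto_id.mono_left nhdsWithin_le_nhds
  -- the per-p bounds, in eventual form
  have hbounds : ∀ᶠ p in 𝓝[>] pc,
      (p^2*m₂*(1 - q p)/2 - p^3*m₃*(1 - q p)^2/6 ≤ p*m₁ - 1
        ∧ p*m₁ - 1 ≤ p^2*m₂*(1 - q p)/2)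
      ∧ ((p^2*m₂/6 - p^3*m₃*(1 - q p)/6)/(2-(1 - q p)) ≤ speedLPP a q p / (1 - q p)^2
        ∧ speedLPP a q p / (1 - q p)^2 ≤ (p^2*m₂/6 + p^3*m₃*(1 - q p)/12)/(2-(1 - q p))) := by
    filter_upwards [hmem] with p hp
    obtain ⟨⟨hc0, hc1⟩, hfix⟩ := hq p hp
    have hp0 : 0 < p := lt_trans hpcpos hp.1
    have hp1 : p ≤ 1 := hp.2
    refine ⟨eps_bounds ha0 ha1 Sa hm1 hm2 hm3 hp0 hp1 hc0 hc1 hfix, ?_⟩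
    have hsb := speed_bounds ha0 ha1 Sa hm1 hm2 hm3 hp0 hp1 hc0 hc1 hfix
    exact hsb
  have hεpos : ∀ᶠ p in 𝓝[>] pc, 0 < 1 - q p := by
    filter_upwards [hmem] with p hp
    obtain ⟨⟨hc0, hc1⟩, _⟩ := hq p hp
    linarith
  -- limit of (p - pc)/ε
  have hRlim : Tendsto (fun p => (p - pc)/(1 - q p)) (𝓝[>] pc) (𝓝 (pc^2*m₂/2/m₁)) := by
    have hlow : Tendsto (fun p => (p^2*m₂/2 - p^3*m₃*(1 - q p)/6)/m₁) (𝓝[>] pc)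
        (𝓝 (pc^2*m₂/2/m₁)) := by
      have h1 : Tendsto (fun p : ℝ => p^2*m₂/2 - p^3*m₃*(1 - q p)/6) (𝓝[>] pc)
          (𝓝 (pc^2*m₂/2 - pc^3*m₃*0/6)) :=
        (((htp.pow 2).mul_const m₂).div_const 2).sub
          ((((htp.pow 3).mul_const m₃).mul hεto0).div_const 6)
      have h2 := h1.div_const m₁
      rw [show (pc^2*m₂/2 - pc^3*m₃*0/6)/m₁ = pc^2*m₂/2/m₁ by ring] at h2
      exact h2
    have hup : Tendsto (fun p : ℝ => (p^2*m₂/2)/m₁) (𝓝[>] pc) (𝓝 (pc^2*m₂/2/m₁)) :=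
      (((htp.pow 2).mul_const m₂).div_const 2).div_const m₁
    refine tendsto_of_tendsto_of_tendsto_of_le_of_le' hlow hup ?_ ?_
    · filter_upwards [hbounds, hεpos] with p hb hε
      obtain ⟨⟨hK1, hK2'⟩, _⟩ := hb
      rw [div_le_div_iff₀ hm1pos hε]
      nlinarith [hK1, hm1pc]
    · filter_upwards [hbounds, hεpos] with p hb hε
      obtain ⟨⟨hK1, hK2'⟩, _⟩ := hb
      rw [div_le_div_iff₀ hε hm1pos]
      nlinarith [hK2', hm1pc]
  -- limit of v/ε²
  have hVlim : Tendsto (fun p => speedLPP a q p/(1 - q p)^2) (𝓝[>] pc) (𝓝 (pc^2*m₂/12)) := by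
    have hlow : Tendsto (fun p => (p^2*m₂/6 - p^3*m₃*(1 - q p)/6)/(2-(1 - q p))) (𝓝[>] pc)
        (𝓝 (pc^2*m₂/12)) := by
      have h1 : Tendsto (fun p : ℝ => p^2*m₂/6 - p^3*m₃*(1 - q p)/6) (𝓝[>] pc)
          (𝓝 (pc^2*m₂/6 - pc^3*m₃*0/6)) :=
        (((htp.pow 2).mul_const m₂).div_const 6).sub
          ((((htp.pow 3).mul_const m₃).mul hεto0).div_const 6)
      have h2 : Tendsto (fun p : ℝ => 2-(1 - q p)) (𝓝[>] pc) (𝓝 (2 - 0)) :=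
        tendsto_const_nhds.sub hεto0
      have h3 := h1.div h2 (by norm_num)
      rw [show (pc^2*m₂/6 - pc^3*m₃*0/6)/(2-0) = pc^2*m₂/12 by ring] at h3
      exact h3
    have hup : Tendsto (fun p => (p^2*m₂/6 + p^3*m₃*(1 - q p)/12)/(2-(1 - q p))) (𝓝[>] pc)
        (𝓝 (pc^2*m₂/12)) := by
      have h1 : Tendsto (fun p : ℝ => p^2*m₂/6 + p^3*m₃*(1 - q p)/12) (𝓝[>] pc)
          (𝓝 (pc^2*m₂/6 + pc^3*m₃*0/12)) :=
        (((htp.pow 2).mul_const m₂).div_const 6).add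
          ((((htp.pow 3).mul_const m₃).mul hεto0).div_const 12)
      have h2 : Tendsto (fun p : ℝ => 2-(1 - q p)) (𝓝[>] pc) (𝓝 (2 - 0)) :=
        tendsto_const_nhds.sub hεto0
      have h3 := h1.div h2 (by norm_num)
      rw [show (pc^2*m₂/6 + pc^3*m₃*0/12)/(2-0) = pc^2*m₂/12 by ring] at h3
      exact h3
    refine tendsto_of_tendsto_of_tendsto_of_le_of_le' hlow hup ?_ ?_
    · filter_upwards [hbounds] with p hb
      exact hb.2.1
    · filter_upwards [hbounds] with p hb
      exact hb.2.2
  -- assemble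
  have hL2pos : (0:ℝ) < pc^2*m₂/2/m₁ := by positivity
  have hfinal := hVlim.div (hRlim.pow 2) (pow_ne_zero 2 (ne_of_gt hL2pos))
  have hvaleq : (pc^2*m₂/12)/((pc^2*m₂/2/m₁)^2) = m₁^4/(3*m₂) := by
    rw [hpc]
    field_simp
    ring
  rw [hvaleq] at hfinal
  refine hfinal.congr' ?_
  filter_upwards [hmem, hεpos] with p hp hε
  have hpne : p - pc ≠ 0 := by
    have := hp.1; intro h; apply absurd this; simp; linarith [sub_eq_zero.1 h]
  have hεne : 1 - q p ≠ 0 := ne_of_gt hε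
  simp only [Pi.div_apply]
  field_simp
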